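/- Let (p_j)_{0≤j<J} be a positive probability vector and define f_j(w) = p_j w + ∑_{i<j} p_i on ℝ. Then for any words j_1⋯j_n and j_1'⋯j_n' in {0,…,J−1}^n with f_{j_1}∘⋯∘f_{j_n} ≠ f_{j_1'}∘⋯∘f_{j_n'}, the distance between these affine maps satisfies dist(f_{j_1⋯j_n}, f_{j_1'⋯j_n'}) ≥ (min_j p_j)^n, where the distance of two affine maps x ↦ dx + δ and x ↦ d'x + δ' is |δ − δ'| if d = d' and ∞ otherwise. In particular the IFS {f_j} satisfies the Exponential Separation Condition. -/

import Mathlib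

section Aux

variable {J : ℕ} {p : Fin J → ℝ} {f : Fin J → ℝ → ℝ}

/-- intercept of `f j` -/
noncomputable def stmt8q (p : Fin J → ℝ) (j : Fin J) : ℝ :=
  ∑ i ∈ Finset.univ.filter (· < j), p i

/-- the composition -/
def stmt8F (f : Fin J → ℝ → ℝ) (n : ℕ) (u : Fin n → Fin J) : ℝ → ℝ :=
  (List.ofFn fun i => f (u i)).foldr (· ∘ ·) id

lemma stmt8F_zero (u : Fin 0 → Fin J) : stmt8F f 0 u = id := rfl

lemma stmt8F_succ (n : ℕ) (u : Fin (n + 1) → Fin J) :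
    stmt8F f (n + 1) u = f (u 0) ∘ stmt8F f n (u ∘ Fin.succ) := by
  simp [stmt8F, List.ofFn_succ]

lemma stmt8q_nonneg (hp : ∀ j, 0 < p j) (j : Fin J) : 0 ≤ stmt8q p j :=
  Finset.sum_nonneg fun i _ => (hp i).le

lemma stmt8q_add (hp : ∀ j, 0 < p j) {j j' : Fin J} (h : j < j') :
    stmt8q p j + p j ≤ stmt8q p j' := by
  have hmem : j ∉ Finset.univ.filter (· < j) := by simp
  have hsub : insert j (Finset.univ.filter (· < j)) ⊆ Finset.univ.filter (· < j') := by
    intro i hi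
    simp only [Finset.mem_insert, Finset.mem_filter, Finset.mem_univ, true_and] at hi ⊢
    rcases hi with rfl | hi
    · exact h
    · exact hi.trans h
  calc stmt8q p j + p j = ∑ i ∈ insert j (Finset.univ.filter (· < j)), p i := by
        rw [Finset.sum_insert hmem, stmt8q]; ring
    _ ≤ stmt8q p j' := Finset.sum_le_sum_of_subset_of_nonneg hsub fun i _ _ => (hp i).le

lemma stmt8q_add_le_one (hp : ∀ j, 0 < p j) (hsum : ∑ j, p j = 1) (j : Fin J) :
    stmt8q p j + p j ≤ 1 := by
  have hmem : j ∉ Finset.univ.filter (· < j) := by simp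
  calc stmt8q p j + p j = ∑ i ∈ insert j (Finset.univ.filter (· < j)), p i := by
        rw [Finset.sum_insert hmem, stmt8q]; ring
    _ ≤ ∑ j, p j := Finset.sum_le_sum_of_subset_of_nonneg (Finset.subset_univ _)
        fun i _ _ => (hp i).le
    _ = 1 := hsum

lemma stmt8f_apply (hf : ∀ j, f j = fun w => p j * w + ∑ i ∈ Finset.univ.filter (· < j), p i)
    (j : Fin J) (x : ℝ) : f j x = p j * x + stmt8q p j := by
  rw [hf]; rfl

lemma stmt8F_zero_nonneg (hp : ∀ j, 0 < p j)
    (hf : ∀ j, f j = fun w => p j * w + ∑ i ∈ Finset.univ.filter (· < j), p i) :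
    ∀ n (u : Fin n → Fin J), 0 ≤ stmt8F f n u 0 := by
  intro n
  induction n with
  | zero => intro u; simp [stmt8F_zero]
  | succ n ih =>
    intro u
    rw [stmt8F_succ]
    simp only [Function.comp_apply, stmt8f_apply hf]
    have := ih (u ∘ Fin.succ)
    have := stmt8q_nonneg hp (u 0)
    have := (hp (u 0)).le
    positivity

lemma stmt8F_one_le (hp : ∀ j, 0 < p j) (hsum : ∑ j, p j = 1)
    (hf : ∀ j, f j = fun w => p j * w + ∑ i ∈ Finset.univ.filter (· < j), p i) :
    ∀ n (u : Fin n → Fin J), stmt8F f n u 1 ≤ 1 := by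
  intro n
  induction n with
  | zero => intro u; simp [stmt8F_zero]
  | succ n ih =>
    intro u
    rw [stmt8F_succ]
    simp only [Function.comp_apply, stmt8f_apply hf]
    have h1 := ih (u ∘ Fin.succ)
    have h2 := stmt8q_add_le_one hp hsum (u 0)
    nlinarith [hp (u 0)]

lemma stmt8F_one_eq (hf : ∀ j, f j = fun w => p j * w + ∑ i ∈ Finset.univ.filter (· < j), p i) :
    ∀ n (u : Fin n → Fin J), stmt8F f n u 1 = (∏ i, p (u i)) + stmt8F f n u 0 := by
  intro n
  induction n with
  | zero => intro u; simp [stmt8F_zero]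
  | succ n ih =>
    intro u
    rw [stmt8F_succ]
    simp only [Function.comp_apply, stmt8f_apply hf]
    rw [ih (u ∘ Fin.succ), Fin.prod_univ_succ]
    simp only [Function.comp_apply]
    ring

lemma stmt8prod_ge (m : ℝ) (hm0 : 0 ≤ m) (hm : ∀ j, m ≤ p j) (n : ℕ) (u : Fin n → Fin J) :
    m ^ n ≤ ∏ i, p (u i) := by
  calc m ^ n = ∏ _i : Fin n, m := by simp
    _ ≤ ∏ i, p (u i) := Finset.prod_le_prod (fun _ _ => hm0) fun i _ => hm (u i)

/-- one-sided separation bound -/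
lemma stmt8side (hp : ∀ j, 0 < p j) (hsum : ∑ j, p j = 1)
    (hf : ∀ j, f j = fun w => p j * w + ∑ i ∈ Finset.univ.filter (· < j), p i)
    (m : ℝ) (hm0 : 0 < m) (hm : ∀ j, m ≤ p j)
    (n : ℕ) (u u' : Fin (n + 1) → Fin J) (h : u 0 < u' 0) :
    m ^ (n + 1) ≤ stmt8F f (n + 1) u' 0 - stmt8F f (n + 1) u 0 := by
  rw [stmt8F_succ n u, stmt8F_succ n u']
  simp only [Function.comp_apply, stmt8f_apply hf]
  set δ := stmt8F f n (u ∘ Fin.succ) 0 with hδ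
  set δ' := stmt8F f n (u' ∘ Fin.succ) 0 with hδ'
  have hδ0 : 0 ≤ δ := stmt8F_zero_nonneg hp hf n _
  have hδ'0 : 0 ≤ δ' := stmt8F_zero_nonneg hp hf n _
  have hP : m ^ n ≤ ∏ i, p ((u ∘ Fin.succ) i) := stmt8prod_ge m hm0.le hm n _
  have hδ1 : δ + (∏ i, p ((u ∘ Fin.succ) i)) ≤ 1 := by
    have := stmt8F_one_le hp hsum hf n (u ∘ Fin.succ)
    rw [stmt8F_one_eq hf n (u ∘ Fin.succ)] at this
    linarith
  have hq : stmt8q p (u 0) + p (u 0) ≤ stmt8q p (u' 0) := stmt8q_add hp h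
  have hpu := hp (u 0)
  have hpu' := hp (u' 0)
  have hmu : m ≤ p (u 0) := hm (u 0)
  have key : m * m ^ n ≤ p (u 0) * (∏ i, p ((u ∘ Fin.succ) i)) := by
    apply mul_le_mul hmu hP (by positivity) hpu.le
  have hδle : p (u 0) * δ ≤ p (u 0) - p (u 0) * (∏ i, p ((u ∘ Fin.succ) i)) := by
    nlinarith
  calc m ^ (n + 1) = m * m ^ n := by ring
    _ ≤ p (u 0) * (∏ i, p ((u ∘ Fin.succ) i)) := key
    _ ≤ (p (u' 0) * δ' + stmt8q p (u' 0)) - (p (u 0) * δ + stmt8q p (u 0)) := by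
        nlinarith
    _ = _ := rfl

lemma stmt8main (hp : ∀ j, 0 < p j) (hsum : ∑ j, p j = 1)
    (hf : ∀ j, f j = fun w => p j * w + ∑ i ∈ Finset.univ.filter (· < j), p i)
    (m : ℝ) (hm0 : 0 < m) (hm : ∀ j, m ≤ p j) :
    ∀ n (u u' : Fin n → Fin J), u ≠ u' →
      m ^ n ≤ |stmt8F f n u 0 - stmt8F f n u' 0| := by
  intro n
  induction n with
  | zero =>
    intro u u' hne
    exact absurd (Subsingleton.elim u u') hne
  | succ n ih =>
    intro u u' hne
    rcases lt_trichotomy (u 0) (u' 0) with h | h | h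
    · have := stmt8side hp hsum hf m hm0 hm n u u' h
      rw [abs_sub_comm]
      calc m ^ (n + 1) ≤ stmt8F f (n + 1) u' 0 - stmt8F f (n + 1) u 0 := this
        _ ≤ |stmt8F f (n + 1) u' 0 - stmt8F f (n + 1) u 0| := le_abs_self _
    · -- equal heads, tails differ
      have htail : (u ∘ Fin.succ) ≠ (u' ∘ Fin.succ) := by
        intro heq
        apply hne
        funext i
        refine Fin.cases h (fun j => ?_) i
        exact congrFun heq j
      have hih := ih (u ∘ Fin.succ) (u' ∘ Fin.succ) htail
      rw [stmt8F_succ n u, stmt8F_succ n u']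
      simp only [Function.comp_apply, stmt8f_apply hf, h]
      have : p (u' 0) * stmt8F f n (u ∘ Fin.succ) 0 + stmt8q p (u' 0) -
          (p (u' 0) * stmt8F f n (u' ∘ Fin.succ) 0 + stmt8q p (u' 0)) =
          p (u' 0) * (stmt8F f n (u ∘ Fin.succ) 0 - stmt8F f n (u' ∘ Fin.succ) 0) := by ring
      rw [this, abs_mul, abs_of_pos (hp (u' 0))]
      calc m ^ (n + 1) = m * m ^ n := by ring
        _ ≤ p (u' 0) * |stmt8F f n (u ∘ Fin.succ) 0 - stmt8F f n (u' ∘ Fin.succ) 0| :=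
            mul_le_mul (hm (u' 0)) hih (by positivity) (hp (u' 0)).le
    · have := stmt8side hp hsum hf m hm0 hm n u' u h
      calc m ^ (n + 1) ≤ stmt8F f (n + 1) u 0 - stmt8F f (n + 1) u' 0 := this
        _ ≤ |stmt8F f (n + 1) u 0 - stmt8F f (n + 1) u' 0| := le_abs_self _

end Aux

/-- For the driving IFS `f j w = p j * w + ∑_{i < j} p i` of a positive probability
vector `p`, any two distinct compositions of length `n` with equal slopes have
intercepts at distance at least `(min_j p j)^n`; in particular the IFS satisfies the
Exponential Separation Condition with `c = min_j p j`. -/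
theorem stmt8 (J : ℕ) (hJ : 2 ≤ J) (p : Fin J → ℝ) (hp : ∀ j, 0 < p j)
    (hsum : ∑ j, p j = 1)
    (f : Fin J → ℝ → ℝ)
    (hf : ∀ j, f j = fun w => p j * w + ∑ i ∈ Finset.univ.filter (· < j), p i) :
    ∀ n : ℕ, ∀ u u' : Fin n → Fin J,
      ((List.ofFn fun i => f (u i)).foldr (· ∘ ·) id) ≠
        ((List.ofFn fun i => f (u' i)).foldr (· ∘ ·) id) →
      (∏ i, p (u i)) = (∏ i, p (u' i)) →
      (Finset.univ.inf' ⟨⟨0, by omega⟩, Finset.mem_univ _⟩ p) ^ n ≤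
        |((List.ofFn fun i => f (u i)).foldr (· ∘ ·) id) 0 -
          ((List.ofFn fun i => f (u' i)).foldr (· ∘ ·) id) 0| := by
  intro n u u' hne _
  set m := Finset.univ.inf' ⟨⟨0, by omega⟩, Finset.mem_univ _⟩ p with hm_def
  have hm : ∀ j, m ≤ p j := fun j => Finset.inf'_le p (Finset.mem_univ j)
  have hm0 : 0 < m := by
    rw [hm_def]; refine (Finset.lt_inf'_iff ..).2 ?_
    exact fun j _ => hp j
  have huu' : u ≠ u' := by
    intro h; exact hne (by rw [h])
  exact stmt8main hp hsum hf m hm0 hm n u u' huu'
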